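/- Let r ∈ ℤ be nonzero. Then there exists an integer ℓ > 0 such that the map x ↦ x^r defines a bijection from {x ∈ ℚ_p^× : ac_ℓ(x) = 1} onto {y ∈ ℚ_p^× : ac_{ℓ'}(y) = 1 and v(y) ∈ rℤ}, where ℓ' = ℓ + v(r). -/

import Mathlib

namespace KZ

variable (p : ℕ) [Fact p.Prime]

private lemma one_lt_pR : (1 : ℝ) < p := by exact_mod_cast (Fact.out : p.Prime).one_lt

private lemma pR_pos : (0 : ℝ) < p := lt_trans one_pos (one_lt_pR p)

private lemma pQ_ne_zero : (p : ℚ_[p]) ≠ 0 :=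
  Nat.cast_ne_zero.mpr (Fact.out : p.Prime).ne_zero

/-- If `‖a - b‖ < ‖b‖` then `‖a‖ = ‖b‖`. -/
private lemma norm_eq_of_sub_lt {a b : ℚ_[p]} (h : ‖a - b‖ < ‖b‖) : ‖a‖ = ‖b‖ := by
  have h1 : ‖a‖ ≤ ‖b‖ := by
    have : a = b + (a - b) := by ring
    rw [this]
    exact le_trans (Padic.nonarchimedean _ _) (max_le le_rfl h.le)
  have h2 : ‖b‖ ≤ ‖a‖ := by
    have hb : b = a + (b - a) := by ring
    have := Padic.nonarchimedean a (b - a)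
    rw [← hb] at this
    rcases max_cases ‖a‖ ‖b - a‖ with ⟨he, _⟩ | ⟨he, _⟩
    · rwa [he] at this
    · rw [he, norm_sub_rev] at this
      exact absurd (lt_of_le_of_lt this h) (lt_irrefl _)
  exact le_antisymm h1 h2

private lemma pow_sub_one_norm_le {u : ℚ_[p]} (hu : ‖u‖ ≤ 1) (n : ℕ) :
    ‖u ^ n - 1‖ ≤ ‖u - 1‖ := by
  induction n with
  | zero => simpa using norm_nonneg _
  | succ k ih =>
      have hsplit : u ^ (k + 1) - 1 = u ^ k * (u - 1) + (u ^ k - 1) := by ring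
      rw [hsplit]
      refine le_trans (Padic.nonarchimedean _ _) (max_le ?_ ih)
      calc ‖u ^ k * (u - 1)‖ = ‖u‖ ^ k * ‖u - 1‖ := by rw [norm_mul, norm_pow]
        _ ≤ 1 * ‖u - 1‖ := by
            exact mul_le_mul_of_nonneg_right (pow_le_one₀ (norm_nonneg u) hu) (norm_nonneg _)
        _ = ‖u - 1‖ := one_mul _

private lemma geom_sum_sub_norm_le {u : ℚ_[p]} (hu : ‖u‖ ≤ 1) (n : ℕ) :
    ‖(∑ i ∈ Finset.range n, u ^ i) - n‖ ≤ ‖u - 1‖ := by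
  induction n with
  | zero => simpa using norm_nonneg _
  | succ k ih =>
      have hsplit : (∑ i ∈ Finset.range (k + 1), u ^ i) - ((k + 1 : ℕ) : ℚ_[p])
          = ((∑ i ∈ Finset.range k, u ^ i) - k) + (u ^ k - 1) := by
        rw [Finset.sum_range_succ]; push_cast; ring
      rw [hsplit]
      exact le_trans (Padic.nonarchimedean _ _)
        (max_le ih (pow_sub_one_norm_le p hu k))

/-- `‖u^n - 1‖ = ‖n‖·‖u - 1‖` when `‖u - 1‖ < ‖n‖`. -/
private lemma norm_pow_sub_one {u : ℚ_[p]} (n : ℕ) (hlt : ‖u - 1‖ < ‖(n : ℚ_[p])‖) :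
    ‖u ^ n - 1‖ = ‖(n : ℚ_[p])‖ * ‖u - 1‖ := by
  have hn1 : ‖(n : ℚ_[p])‖ ≤ 1 := by
    have := Padic.norm_int_le_one (p := p) (n : ℤ)
    rwa [Int.cast_natCast] at this
  have hu : ‖u‖ ≤ 1 := by
    have h1 : ‖u‖ = ‖(1 : ℚ_[p])‖ :=
      norm_eq_of_sub_lt p (by rw [norm_one]; exact lt_of_lt_of_le hlt hn1)
    rw [h1, norm_one]
  have hS : ‖(∑ i ∈ Finset.range n, u ^ i)‖ = ‖(n : ℚ_[p])‖ :=
    norm_eq_of_sub_lt p (lt_of_le_of_lt (geom_sum_sub_norm_le p hu n) hlt)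
  calc ‖u ^ n - 1‖ = ‖(∑ i ∈ Finset.range n, u ^ i) * (u - 1)‖ := by rw [geom_sum_mul]
    _ = ‖(n : ℚ_[p])‖ * ‖u - 1‖ := by rw [norm_mul, hS]

/-- zpow version. -/
private lemma norm_zpow_sub_one {u : ℚ_[p]} (r : ℤ) (hr : r ≠ 0)
    (hlt : ‖u - 1‖ < ‖(r : ℚ_[p])‖) :
    ‖u ^ r - 1‖ = ‖(r : ℚ_[p])‖ * ‖u - 1‖ := by
  have hr1 : ‖(r : ℚ_[p])‖ ≤ 1 := Padic.norm_int_le_one r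
  have hu1 : ‖u‖ = 1 := by
    have h1 : ‖u‖ = ‖(1 : ℚ_[p])‖ :=
      norm_eq_of_sub_lt p (by rw [norm_one]; exact lt_of_lt_of_le hlt hr1)
    rw [h1, norm_one]
  have hcast : ((r.natAbs : ℕ) : ℚ_[p]) = ((r.natAbs : ℤ) : ℚ_[p]) :=
    (Int.cast_natCast r.natAbs).symm
  have hn : ‖((r.natAbs : ℕ) : ℚ_[p])‖ = ‖(r : ℚ_[p])‖ := by
    rcases Int.natAbs_eq r with h | h
    · rw [hcast, ← h]
    · rw [hcast]
      nth_rewrite 2 [h]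
      rw [Int.cast_neg, norm_neg]
  rcases Int.natAbs_eq r with h | h
  · conv_lhs => rw [h]
    rw [zpow_natCast, norm_pow_sub_one p _ (by rwa [hn]), hn]
  · have hu0 : u ≠ 0 := by intro h0; rw [h0] at hu1; simp at hu1
    have hinv : u ^ r = (u ^ r.natAbs)⁻¹ := by
      conv_lhs => rw [h]
      rw [zpow_neg, zpow_natCast]
    have hnormpow : ‖u ^ r.natAbs‖ = 1 := by rw [norm_pow, hu1, one_pow]
    have : ‖u ^ r - 1‖ = ‖u ^ r.natAbs - 1‖ := by
      rw [hinv]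
      have hne : (u ^ r.natAbs) ≠ 0 := pow_ne_zero _ hu0
      have : (u ^ r.natAbs)⁻¹ - 1 = (u ^ r.natAbs)⁻¹ * (1 - u ^ r.natAbs) := by
        field_simp
      rw [this, norm_mul, norm_inv, hnormpow, inv_one, one_mul, norm_sub_rev]
    rw [this, norm_pow_sub_one p _ (by rwa [hn]), hn]

/-- Hensel-type root extraction. -/
private lemma exists_pow_root (n : ℕ) (w : ℚ_[p])
    (hw : ‖w - 1‖ < ‖(n : ℚ_[p])‖ ^ 2) :
    ∃ u : ℚ_[p], u ^ n = w ∧ ‖(n : ℚ_[p])‖ * ‖u - 1‖ = ‖w - 1‖ := by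
  have hn1 : ‖(n : ℚ_[p])‖ ≤ 1 := by
    have := Padic.norm_int_le_one (p := p) (n : ℤ)
    rwa [Int.cast_natCast] at this
  have hwle : ‖w‖ ≤ 1 := by
    have h1 : ‖w - 1‖ < 1 := lt_of_lt_of_le hw (by nlinarith [norm_nonneg ((n : ℚ_[p]))])
    have h2 : ‖w‖ = ‖(1 : ℚ_[p])‖ := norm_eq_of_sub_lt p (by rw [norm_one]; exact h1)
    rw [h2, norm_one]
  set W : ℤ_[p] := ⟨w, hwle⟩ with hW
  set F : Polynomial ℤ_[p] := Polynomial.X ^ n - Polynomial.C W with hF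
  have heval1 : F.eval 1 = 1 - W := by
    rw [hF, Polynomial.eval_sub, Polynomial.eval_pow, Polynomial.eval_X, Polynomial.eval_C,
      one_pow]
  have hderiv : F.derivative.eval 1 = (n : ℤ_[p]) := by
    rw [hF, Polynomial.derivative_sub, Polynomial.derivative_C, Polynomial.derivative_X_pow,
      sub_zero, Polynomial.eval_mul, Polynomial.eval_C, Polynomial.eval_pow, Polynomial.eval_X,
      one_pow, mul_one]
  have hnormW : ‖F.eval 1‖ = ‖w - 1‖ := by
    rw [heval1, PadicInt.norm_def, ← norm_neg]
    congr 1
    rw [PadicInt.coe_sub, PadicInt.coe_one]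
    show -((1 : ℚ_[p]) - w) = w - 1
    ring
  have hnormD : ‖F.derivative.eval 1‖ = ‖(n : ℚ_[p])‖ := by
    rw [hderiv, PadicInt.norm_def]
    congr 1
  have hcond : ‖F.eval 1‖ < ‖F.derivative.eval 1‖ ^ 2 := by
    rw [hnormW, hnormD]; exact hw
  obtain ⟨z, hz, hz1, -, -⟩ := hensels_lemma hcond
  have hzW : z ^ n = W := by
    rw [hF, Polynomial.coe_aeval_eq_eval, Polynomial.eval_sub, Polynomial.eval_pow, Polynomial.eval_X, Polynomial.eval_C]
      at hz
    exact sub_eq_zero.mp hz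
  have hzn : ((z : ℚ_[p])) ^ n = w := by
    calc ((z : ℚ_[p])) ^ n = ((z ^ n : ℤ_[p]) : ℚ_[p]) := by rw [PadicInt.coe_pow]
      _ = w := by rw [hzW]
  refine ⟨(z : ℚ_[p]), hzn, ?_⟩
  have hlt : ‖(z : ℚ_[p]) - 1‖ < ‖(n : ℚ_[p])‖ := by
    have h2 : ‖z - 1‖ < ‖(n : ℚ_[p])‖ := by rwa [Polynomial.coe_aeval_eq_eval, hnormD] at hz1
    rwa [PadicInt.norm_def, PadicInt.coe_sub, PadicInt.coe_one] at h2
  rw [← norm_pow_sub_one p n hlt, hzn]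

private lemma val_zpow (x : ℚ_[p]) (hx : x ≠ 0) (r : ℤ) :
    (x ^ r).valuation = r * x.valuation := by
  have hxr : x ^ r ≠ 0 := zpow_ne_zero r hx
  have h1 : ((p : ℝ)) ^ (-(x ^ r).valuation) = (p : ℝ) ^ (-(r * x.valuation)) := by
    rw [← Padic.norm_eq_zpow_neg_valuation hxr, norm_zpow, Padic.norm_eq_zpow_neg_valuation hx, ← zpow_mul]
    congr 1
    ring
  have := (zpow_right_strictMono₀ (one_lt_pR p)).injective h1
  omega

private lemma val_eq_zero_of_norm_one {u : ℚ_[p]} (hu : ‖u‖ = 1) : u.valuation = 0 := by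
  have hu0 : u ≠ 0 := by intro h; rw [h] at hu; simp at hu
  have h1 : (p : ℝ) ^ (-u.valuation) = (p : ℝ) ^ (0 : ℤ) := by
    rw [← Padic.norm_eq_zpow_neg_valuation hu0, hu, zpow_zero]
  have := (zpow_right_strictMono₀ (one_lt_pR p)).injective h1
  omega



private lemma norm_natAbs (r : ℤ) : ‖((r.natAbs : ℕ) : ℚ_[p])‖ = ‖(r : ℚ_[p])‖ := by
  have hcast : ((r.natAbs : ℕ) : ℚ_[p]) = ((r.natAbs : ℤ) : ℚ_[p]) :=
    (Int.cast_natCast r.natAbs).symm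
  rcases Int.natAbs_eq r with h | h
  · rw [hcast, ← h]
  · rw [hcast]
    nth_rewrite 2 [h]
    rw [Int.cast_neg, norm_neg]

private lemma unit_part_norm_one {x : ℚ_[p]} (hx : x ≠ 0) :
    ‖x * (p : ℚ_[p]) ^ (-x.valuation)‖ = 1 := by
  rw [norm_mul, Padic.norm_eq_zpow_neg_valuation hx, Padic.norm_p_zpow, neg_neg,
    ← zpow_add₀ (ne_of_gt (pR_pos p)), neg_add_cancel, zpow_zero]

private lemma unit_part_mul (x : ℚ_[p]) :
    x * (p : ℚ_[p]) ^ (-x.valuation) * (p : ℚ_[p]) ^ x.valuation = x := by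
  rw [mul_assoc, ← zpow_add₀ (pQ_ne_zero p), neg_add_cancel, zpow_zero, mul_one]

private lemma unit_part_zpow {x : ℚ_[p]} (hx : x ≠ 0) (r : ℤ) :
    (x * (p : ℚ_[p]) ^ (-x.valuation)) ^ r
      = x ^ r * (p : ℚ_[p]) ^ (-(x ^ r).valuation) := by
  rw [mul_zpow, ← zpow_mul, val_zpow p x hx r]
  congr 2
  ring

private lemma val_p_zpow (lam : ℤ) : ((p : ℚ_[p]) ^ lam).valuation = lam := by
  rw [val_zpow p _ (pQ_ne_zero p) lam, Padic.valuation_p, mul_one]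

/-- `ac_ℓ(x) = 1`: `x` is nonzero and the unit `x·p^{-v(x)}` is congruent to `1` mod `p^ℓ`. -/
def acIsOne (ℓ : ℕ) (x : ℚ_[p]) : Prop :=
  x ≠ 0 ∧ ‖x * (p : ℚ_[p]) ^ (-x.valuation) - 1‖ ≤ (p : ℝ) ^ (-(ℓ : ℤ))

/-- For nonzero `r ∈ ℤ` there is `ℓ > 0` such that `x ↦ x^r` is a bijection from
`{x ∈ ℚ_p^× : ac_ℓ(x) = 1}` onto `{y ∈ ℚ_p^× : ac_{ℓ + v(r)}(y) = 1, v(y) ∈ rℤ}`. -/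
theorem zpow_bijOn_ac_one (r : ℤ) (hr : r ≠ 0) :
    ∃ ℓ : ℕ, 0 < ℓ ∧
      Set.BijOn (fun x : ℚ_[p] => x ^ r)
        {x : ℚ_[p] | acIsOne p ℓ x}
        {y : ℚ_[p] | acIsOne p (ℓ + ((r : ℚ_[p]).valuation).toNat) y ∧
          ∃ lam : ℤ, y.valuation = r * lam} := by
  have hrQ : (r : ℚ_[p]) ≠ 0 := Int.cast_ne_zero.mpr hr
  set v : ℕ := ((r : ℚ_[p]).valuation).toNat with hv
  have hvnn : 0 ≤ (r : ℚ_[p]).valuation := by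
    rw [Padic.valuation_intCast]; exact Int.natCast_nonneg _
  have hvz : ((v : ℤ)) = (r : ℚ_[p]).valuation := Int.toNat_of_nonneg hvnn
  have hnr : ‖(r : ℚ_[p])‖ = (p : ℝ) ^ (-(v : ℤ)) := by
    rw [Padic.norm_eq_zpow_neg_valuation hrQ, hvz]
  have hp1 : (1 : ℝ) < p := one_lt_pR p
  have hkey : (p : ℝ) ^ (-((v + 1 : ℕ) : ℤ)) < ‖(r : ℚ_[p])‖ := by
    rw [hnr]
    apply zpow_lt_zpow_right₀ hp1
    push_cast; omega
  refine ⟨v + 1, Nat.succ_pos _, ?_, ?_, ?_⟩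
  · -- MapsTo
    rintro x ⟨hx0, hxu⟩
    have hy0 : x ^ r ≠ 0 := zpow_ne_zero r hx0
    have hyval := val_zpow p x hx0 r
    have hlt : ‖x * (p : ℚ_[p]) ^ (-x.valuation) - 1‖ < ‖(r : ℚ_[p])‖ :=
      lt_of_le_of_lt hxu hkey
    have hnorm := norm_zpow_sub_one p r hr hlt
    refine ⟨⟨hy0, ?_⟩, ⟨x.valuation, hyval⟩⟩
    rw [← unit_part_zpow p hx0 r, hnorm, hnr]
    calc (p : ℝ) ^ (-(v : ℤ)) * ‖x * (p : ℚ_[p]) ^ (-x.valuation) - 1‖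
        ≤ (p : ℝ) ^ (-(v : ℤ)) * (p : ℝ) ^ (-((v + 1 : ℕ) : ℤ)) :=
          mul_le_mul_of_nonneg_left hxu (by positivity)
      _ = (p : ℝ) ^ (-((v + 1 + v : ℕ) : ℤ)) := by
          rw [← zpow_add₀ (ne_of_gt (pR_pos p))]
          congr 1
          push_cast; ring
  · -- InjOn
    rintro x ⟨hx0, hxu⟩ y ⟨hy0, hyu⟩ hxy
    simp only at hxy
    have hval : x.valuation = y.valuation := by
      have h1 := val_zpow p x hx0 r
      have h2 := val_zpow p y hy0 r
      rw [hxy] at h1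
      exact mul_left_cancel₀ hr (h1.symm.trans h2)
    set u := x * (p : ℚ_[p]) ^ (-x.valuation) with hudef
    set w := y * (p : ℚ_[p]) ^ (-y.valuation) with hwdef
    have hun : ‖u‖ = 1 := unit_part_norm_one p hx0
    have hwn : ‖w‖ = 1 := unit_part_norm_one p hy0
    have hw0 : w ≠ 0 := by intro h; rw [h] at hwn; simp at hwn
    have huw : u ^ r = w ^ r := by
      rw [hudef, hwdef, unit_part_zpow p hx0 r, unit_part_zpow p hy0 r, hxy]
    have ht : (u * w⁻¹) ^ r = 1 := by
      rw [mul_zpow, inv_zpow, huw, mul_inv_cancel₀ (zpow_ne_zero r hw0)]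
    have hdist : ‖u * w⁻¹ - 1‖ = ‖u - w‖ := by
      have h3 : u * w⁻¹ - 1 = (u - w) * w⁻¹ := by field_simp
      rw [h3, norm_mul, norm_inv, hwn, inv_one, mul_one]
    have hsub : ‖u - w‖ < ‖(r : ℚ_[p])‖ := by
      have h4 : u - w = (u - 1) + -(w - 1) := by ring
      rw [h4]
      refine lt_of_le_of_lt (Padic.nonarchimedean _ _) ?_
      rw [norm_neg]
      exact lt_of_le_of_lt (max_le hxu hyu) hkey
    have hzero := norm_zpow_sub_one p r hr (by rwa [hdist])
    rw [ht, sub_self, norm_zero] at hzero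
    have hrn : ‖(r : ℚ_[p])‖ ≠ 0 := norm_ne_zero_iff.mpr hrQ
    have hnz : ‖u * w⁻¹ - 1‖ = 0 := by
      rcases mul_eq_zero.mp hzero.symm with h | h
      · exact absurd h hrn
      · exact h
    have huweq : u = w := by
      have h5 : u * w⁻¹ = 1 := by
        have := sub_eq_zero.mp (norm_eq_zero.mp hnz)
        exact this
      exact (mul_inv_eq_one₀ hw0).mp h5
    calc x = u * (p : ℚ_[p]) ^ x.valuation := (unit_part_mul p x).symm
      _ = w * (p : ℚ_[p]) ^ y.valuation := by rw [huweq, hval]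
      _ = y := unit_part_mul p y
  · -- SurjOn
    rintro y ⟨⟨hy0, hyu⟩, lam, hlam⟩
    set w := y * (p : ℚ_[p]) ^ (-y.valuation) with hwdef
    have hwn : ‖w‖ = 1 := unit_part_norm_one p hy0
    have hnn : ‖((r.natAbs : ℕ) : ℚ_[p])‖ = ‖(r : ℚ_[p])‖ := norm_natAbs p r
    have hwlt : ‖w - 1‖ < ‖((r.natAbs : ℕ) : ℚ_[p])‖ ^ 2 := by
      rw [hnn, hnr]
      refine lt_of_le_of_lt hyu ?_
      rw [sq, ← zpow_add₀ (ne_of_gt (pR_pos p))]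
      apply zpow_lt_zpow_right₀ hp1
      push_cast; omega
    obtain ⟨u, hupow, hueq⟩ := exists_pow_root p r.natAbs w hwlt
    have huble : ‖u - 1‖ ≤ (p : ℝ) ^ (-((v + 1 : ℕ) : ℤ)) := by
      have h1 : ‖((r.natAbs : ℕ) : ℚ_[p])‖ * ‖u - 1‖ ≤ (p : ℝ) ^ (-((v + 1 + v : ℕ) : ℤ)) := by
        rw [hueq]; exact hyu
      rw [hnn, hnr] at h1
      have hpv : (0 : ℝ) < (p : ℝ) ^ (-(v : ℤ)) := by positivity
      rw [mul_comm] at h1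
      have h2 := (le_div_iff₀ hpv).mpr h1
      refine le_trans h2 (le_of_eq ?_)
      rw [← zpow_sub₀ (ne_of_gt (pR_pos p))]
      congr 1
      push_cast; ring
    have hu1 : ‖u‖ = 1 := by
      have hlt1 : ‖u - 1‖ < 1 := by
        refine lt_of_le_of_lt huble ?_
        have h6 : (p : ℝ) ^ (-((v + 1 : ℕ) : ℤ)) < (p : ℝ) ^ (0 : ℤ) :=
          zpow_lt_zpow_right₀ hp1 (by push_cast; omega)
        rwa [zpow_zero] at h6
      have h7 : ‖u‖ = ‖(1 : ℚ_[p])‖ :=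
        norm_eq_of_sub_lt p (by rw [norm_one]; exact hlt1)
      rw [h7, norm_one]
    have hu0 : u ≠ 0 := by intro h; rw [h] at hu1; simp at hu1
    -- pick the right unit
    obtain ⟨u', hu'0, hu'1, hu'b, hu'r⟩ :
        ∃ u' : ℚ_[p], u' ≠ 0 ∧ ‖u'‖ = 1 ∧ ‖u' - 1‖ ≤ (p : ℝ) ^ (-((v + 1 : ℕ) : ℤ)) ∧
          u' ^ r = w := by
      rcases Int.natAbs_eq r with hcase | hcase
      · refine ⟨u, hu0, hu1, huble, ?_⟩
        conv_lhs => rw [hcase]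
        rw [zpow_natCast, hupow]
      · refine ⟨u⁻¹, inv_ne_zero hu0, by rw [norm_inv, hu1, inv_one], ?_, ?_⟩
        · have h8 : u⁻¹ - 1 = u⁻¹ * (1 - u) := by field_simp
          rw [h8, norm_mul, norm_inv, hu1, inv_one, one_mul, norm_sub_rev]
          exact huble
        · rw [inv_zpow]
          conv_lhs => rw [hcase]
          rw [zpow_neg, zpow_natCast, inv_inv, hupow]
    refine ⟨(p : ℚ_[p]) ^ lam * u', ⟨?_, ?_⟩, ?_⟩
    · exact mul_ne_zero (zpow_ne_zero lam (pQ_ne_zero p)) hu'0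
    · have hxval : ((p : ℚ_[p]) ^ lam * u').valuation = lam := by
        rw [Padic.valuation_mul (zpow_ne_zero lam (pQ_ne_zero p)) hu'0,
          val_p_zpow p lam, val_eq_zero_of_norm_one p hu'1, add_zero]
      rw [hxval]
      have hxu : (p : ℚ_[p]) ^ lam * u' * (p : ℚ_[p]) ^ (-lam) = u' := by
        rw [mul_comm ((p : ℚ_[p]) ^ lam) u', mul_assoc,
          ← zpow_add₀ (pQ_ne_zero p), add_neg_cancel, zpow_zero, mul_one]
      rw [hxu]
      exact hu'b
    · show ((p : ℚ_[p]) ^ lam * u') ^ r = y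
      rw [mul_zpow, hu'r, ← zpow_mul]
      calc (p : ℚ_[p]) ^ (lam * r) * w = w * (p : ℚ_[p]) ^ y.valuation := by
            rw [hlam, mul_comm lam r, mul_comm]
        _ = y := unit_part_mul p y

end KZ
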